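/- For ℓ = 1 at the point p = 1/2, the functions h₀(t) = 2√t(t·log(t) - t + 1)/(t-1)² and h₁(t) = -2√t(log(t) - t + 1)/(t-1)² satisfy the coupled system 4t²h_i'' - (8t²/(1-t))h_i' + (4t/(1-t)²)(h_{1-i} - h_i) = -h_i for i = 0,1 on (0,1), and lim_{t→1⁻} h_i(t) = 1 for i = 0,1. -/

import Mathlib

open Set Filter

noncomputable def F0 (t : ℝ) : ℝ := 2 * Real.sqrt t * (t * Real.log t - t + 1) / (t - 1) ^ 2
noncomputable def F0d (t : ℝ) : ℝ :=
  (-(t ^ 2 * Real.log t) - 3 * t * Real.log t + 3 * t ^ 2 - 2 * t - 1) / (Real.sqrt t * (t - 1) ^ 3)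
noncomputable def F0dd (t : ℝ) : ℝ :=
  (3 * t ^ 3 * Real.log t + 18 * t ^ 2 * Real.log t + 3 * t * Real.log t
    - 11 * t ^ 3 - 3 * t ^ 2 + 15 * t - 1) / (2 * Real.sqrt t * t * (t - 1) ^ 4)
noncomputable def F1 (t : ℝ) : ℝ := -2 * Real.sqrt t * (Real.log t - t + 1) / (t - 1) ^ 2
noncomputable def F1d (t : ℝ) : ℝ :=
  (3 * t * Real.log t + Real.log t - t ^ 2 - 2 * t + 3) / (Real.sqrt t * (t - 1) ^ 3)
noncomputable def F1dd (t : ℝ) : ℝ :=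
  (-(15 * t ^ 2 * Real.log t) - 10 * t * Real.log t + Real.log t
    + 3 * t ^ 3 + 19 * t ^ 2 - 23 * t + 1) / (2 * Real.sqrt t * t * (t - 1) ^ 4)

lemma hdF0 : ∀ t ∈ Ioo (0:ℝ) 1, HasDerivAt F0 (F0d t) t := by
  intro t ht
  obtain ⟨ht0, ht1⟩ := ht
  have hs := Real.hasDerivAt_sqrt ht0.ne'
  have hl := Real.hasDerivAt_log ht0.ne'
  have hN : HasDerivAt (fun t : ℝ => t * Real.log t - t + 1) (Real.log t) t := by
    have h := (((hasDerivAt_id t).mul hl).sub (hasDerivAt_id t)).add_const 1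
    refine h.congr_deriv ?_
    field_simp
    simp
  have hnum : HasDerivAt (fun t : ℝ => 2 * Real.sqrt t * (t * Real.log t - t + 1))
      (2 * (1 / (2 * Real.sqrt t)) * (t * Real.log t - t + 1)
        + 2 * Real.sqrt t * Real.log t) t := (hs.const_mul 2).mul hN
  have hD : HasDerivAt (fun t : ℝ => (t - 1) ^ 2) (2 * (t - 1)) t := by
    have h := ((hasDerivAt_id t).sub_const 1).pow 2
    refine h.congr_deriv ?_; simp [id_eq]
  have hden : ((t : ℝ) - 1) ^ 2 ≠ 0 := pow_ne_zero _ (sub_ne_zero.mpr ht1.ne)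
  have h := hnum.div hD hden
  refine h.congr_deriv ?_
  unfold F0d
  obtain ⟨s, hs0, rfl⟩ : ∃ s : ℝ, 0 < s ∧ s ^ 2 = t :=
    ⟨Real.sqrt t, Real.sqrt_pos.mpr ht0, Real.sq_sqrt ht0.le⟩
  rw [Real.sqrt_sq hs0.le]
  have h1 : s ^ 2 - 1 ≠ 0 := sub_ne_zero.mpr ht1.ne
  field_simp
  ring

lemma hdF0d : ∀ t ∈ Ioo (0:ℝ) 1, HasDerivAt F0d (F0dd t) t := by
  intro t ht
  obtain ⟨ht0, ht1⟩ := ht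
  have hs := Real.hasDerivAt_sqrt ht0.ne'
  have hl := Real.hasDerivAt_log ht0.ne'
  have hnum : HasDerivAt
      (fun t : ℝ => -(t ^ 2 * Real.log t) - 3 * t * Real.log t + 3 * t ^ 2 - 2 * t - 1)
      (-((2 : ℕ) * t ^ (2 - 1) * Real.log t + t ^ 2 * t⁻¹)
        - (3 * 1 * Real.log t + 3 * t * t⁻¹) + 3 * ((2 : ℕ) * t ^ (2 - 1))
        - 2 * 1 - 0) t := by
    have h := (((((hasDerivAt_pow 2 t).mul hl).neg).sub
        (((hasDerivAt_id t).const_mul 3).mul hl)).add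
        ((hasDerivAt_pow 2 t).const_mul 3)).sub ((hasDerivAt_id t).const_mul 2)
    have h2 := h.sub_const 1
    refine h2.congr_deriv ?_ <;> simp [id_eq] <;> ring
  have hden : HasDerivAt (fun t : ℝ => Real.sqrt t * (t - 1) ^ 3)
      (1 / (2 * Real.sqrt t) * (t - 1) ^ 3
        + Real.sqrt t * ((3 : ℕ) * (t - 1) ^ (3 - 1) * 1)) t := by
    have h := hs.mul (((hasDerivAt_id t).sub_const 1).pow 3)
    refine h.congr_deriv ?_ <;> simp [id_eq]
  have hsne : Real.sqrt t ≠ 0 := (Real.sqrt_pos.mpr ht0).ne'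
  have hdne : Real.sqrt t * (t - 1) ^ 3 ≠ 0 :=
    mul_ne_zero hsne (pow_ne_zero _ (sub_ne_zero.mpr ht1.ne))
  have h := hnum.div hden hdne
  refine h.congr_deriv ?_
  unfold F0dd
  obtain ⟨s, hs0, rfl⟩ : ∃ s : ℝ, 0 < s ∧ s ^ 2 = t :=
    ⟨Real.sqrt t, Real.sqrt_pos.mpr ht0, Real.sq_sqrt ht0.le⟩
  rw [Real.sqrt_sq hs0.le]
  have h1 : s ^ 2 - 1 ≠ 0 := sub_ne_zero.mpr ht1.ne
  field_simp
  ring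

lemma hdF1 : ∀ t ∈ Ioo (0:ℝ) 1, HasDerivAt F1 (F1d t) t := by
  intro t ht
  obtain ⟨ht0, ht1⟩ := ht
  have hs := Real.hasDerivAt_sqrt ht0.ne'
  have hl := Real.hasDerivAt_log ht0.ne'
  have hN : HasDerivAt (fun t : ℝ => Real.log t - t + 1) (t⁻¹ - 1) t := by
    have h := (hl.sub (hasDerivAt_id t)).add_const 1
    refine h.congr_deriv ?_ <;> simp [id_eq]
  have hnum : HasDerivAt (fun t : ℝ => -2 * Real.sqrt t * (Real.log t - t + 1))
      (-2 * (1 / (2 * Real.sqrt t)) * (Real.log t - t + 1)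
        + -2 * Real.sqrt t * (t⁻¹ - 1)) t := (hs.const_mul (-2)).mul hN
  have hD : HasDerivAt (fun t : ℝ => (t - 1) ^ 2) (2 * (t - 1)) t := by
    have h := ((hasDerivAt_id t).sub_const 1).pow 2
    refine h.congr_deriv ?_; simp [id_eq]
  have hden : ((t : ℝ) - 1) ^ 2 ≠ 0 := pow_ne_zero _ (sub_ne_zero.mpr ht1.ne)
  have h := hnum.div hD hden
  refine h.congr_deriv ?_
  unfold F1d
  obtain ⟨s, hs0, rfl⟩ : ∃ s : ℝ, 0 < s ∧ s ^ 2 = t :=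
    ⟨Real.sqrt t, Real.sqrt_pos.mpr ht0, Real.sq_sqrt ht0.le⟩
  rw [Real.sqrt_sq hs0.le]
  have h1 : s ^ 2 - 1 ≠ 0 := sub_ne_zero.mpr ht1.ne
  field_simp
  ring

lemma hdF1d : ∀ t ∈ Ioo (0:ℝ) 1, HasDerivAt F1d (F1dd t) t := by
  intro t ht
  obtain ⟨ht0, ht1⟩ := ht
  have hs := Real.hasDerivAt_sqrt ht0.ne'
  have hl := Real.hasDerivAt_log ht0.ne'
  have hnum : HasDerivAt
      (fun t : ℝ => 3 * t * Real.log t + Real.log t - t ^ 2 - 2 * t + 3)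
      ((3 * 1 * Real.log t + 3 * t * t⁻¹) + t⁻¹ - (2 : ℕ) * t ^ (2 - 1)
        - 2 * 1 + 0) t := by
    have h := (((((hasDerivAt_id t).const_mul 3).mul hl).add hl).sub
        (hasDerivAt_pow 2 t)).sub ((hasDerivAt_id t).const_mul 2)
    have h2 := h.add_const 3
    refine h2.congr_deriv ?_ <;> simp [id_eq] <;> ring
  have hden : HasDerivAt (fun t : ℝ => Real.sqrt t * (t - 1) ^ 3)
      (1 / (2 * Real.sqrt t) * (t - 1) ^ 3
        + Real.sqrt t * ((3 : ℕ) * (t - 1) ^ (3 - 1) * 1)) t := by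
    have h := hs.mul (((hasDerivAt_id t).sub_const 1).pow 3)
    refine h.congr_deriv ?_ <;> simp [id_eq]
  have hsne : Real.sqrt t ≠ 0 := (Real.sqrt_pos.mpr ht0).ne'
  have hdne : Real.sqrt t * (t - 1) ^ 3 ≠ 0 :=
    mul_ne_zero hsne (pow_ne_zero _ (sub_ne_zero.mpr ht1.ne))
  have h := hnum.div hden hdne
  refine h.congr_deriv ?_
  unfold F1dd
  obtain ⟨s, hs0, rfl⟩ : ∃ s : ℝ, 0 < s ∧ s ^ 2 = t :=
    ⟨Real.sqrt t, Real.sqrt_pos.mpr ht0, Real.sq_sqrt ht0.le⟩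
  rw [Real.sqrt_sq hs0.le]
  have h1 : s ^ 2 - 1 ≠ 0 := sub_ne_zero.mpr ht1.ne
  field_simp
  ring

lemma ode_part (h₀ h₁ : ℝ → ℝ)
    (hh₀ : ∀ t ∈ Ioo (0 : ℝ) 1, h₀ t = F0 t)
    (hh₁ : ∀ t ∈ Ioo (0 : ℝ) 1, h₁ t = F1 t) :
    ∀ t ∈ Ioo (0 : ℝ) 1,
      4 * t ^ 2 * deriv (deriv h₀) t - (8 * t ^ 2 / (1 - t)) * deriv h₀ t
        + (4 * t / (1 - t) ^ 2) * (h₁ t - h₀ t) = -h₀ t := by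
  intro t ht
  have hder : ∀ x ∈ Ioo (0:ℝ) 1, deriv h₀ x = F0d x := by
    intro x hx
    have hev : h₀ =ᶠ[nhds x] F0 := eventuallyEq_of_mem (isOpen_Ioo.mem_nhds hx) hh₀
    rw [hev.deriv_eq, (hdF0 x hx).deriv]
  have h2 : deriv (deriv h₀) t = F0dd t := by
    have hev : deriv h₀ =ᶠ[nhds t] F0d := eventuallyEq_of_mem (isOpen_Ioo.mem_nhds ht) hder
    rw [hev.deriv_eq, (hdF0d t ht).deriv]
  rw [h2, hder t ht, hh₀ t ht, hh₁ t ht]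
  obtain ⟨ht0, ht1⟩ := ht
  unfold F0 F0d F0dd F1
  obtain ⟨s, hs0, rfl⟩ : ∃ s : ℝ, 0 < s ∧ s ^ 2 = t :=
    ⟨Real.sqrt t, Real.sqrt_pos.mpr ht0, Real.sq_sqrt ht0.le⟩
  rw [Real.sqrt_sq hs0.le]
  have h1 : s ^ 2 - 1 ≠ 0 := sub_ne_zero.mpr ht1.ne
  have h1' : 1 - s ^ 2 ≠ 0 := sub_ne_zero.mpr ht1.ne'
  field_simp
  ring

lemma ode_part' (h₀ h₁ : ℝ → ℝ)
    (hh₀ : ∀ t ∈ Ioo (0 : ℝ) 1, h₀ t = F0 t)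
    (hh₁ : ∀ t ∈ Ioo (0 : ℝ) 1, h₁ t = F1 t) :
    ∀ t ∈ Ioo (0 : ℝ) 1,
      4 * t ^ 2 * deriv (deriv h₁) t - (8 * t ^ 2 / (1 - t)) * deriv h₁ t
        + (4 * t / (1 - t) ^ 2) * (h₀ t - h₁ t) = -h₁ t := by
  intro t ht
  have hder : ∀ x ∈ Ioo (0:ℝ) 1, deriv h₁ x = F1d x := by
    intro x hx
    have hev : h₁ =ᶠ[nhds x] F1 := eventuallyEq_of_mem (isOpen_Ioo.mem_nhds hx) hh₁
    rw [hev.deriv_eq, (hdF1 x hx).deriv]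
  have h2 : deriv (deriv h₁) t = F1dd t := by
    have hev : deriv h₁ =ᶠ[nhds t] F1d := eventuallyEq_of_mem (isOpen_Ioo.mem_nhds ht) hder
    rw [hev.deriv_eq, (hdF1d t ht).deriv]
  rw [h2, hder t ht, hh₀ t ht, hh₁ t ht]
  obtain ⟨ht0, ht1⟩ := ht
  unfold F0 F1 F1d F1dd
  obtain ⟨s, hs0, rfl⟩ : ∃ s : ℝ, 0 < s ∧ s ^ 2 = t :=
    ⟨Real.sqrt t, Real.sqrt_pos.mpr ht0, Real.sq_sqrt ht0.le⟩
  rw [Real.sqrt_sq hs0.le]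
  have h1 : s ^ 2 - 1 ≠ 0 := sub_ne_zero.mpr ht1.ne
  have h1' : 1 - s ^ 2 ≠ 0 := sub_ne_zero.mpr ht1.ne'
  field_simp
  ring

lemma hIoo_mem : Ioo (0:ℝ) 1 ∈ nhdsWithin (1:ℝ) (Iio 1) :=
  Ioo_mem_nhdsLT_of_mem (by constructor <;> norm_num)

lemma hslope_log : Tendsto (fun x : ℝ => Real.log x / (x - 1)) (nhdsWithin 1 (Iio 1)) (nhds 1) := by
  have h := hasDerivAt_iff_tendsto_slope.mp (Real.hasDerivAt_log one_ne_zero)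
  have h2 : Tendsto (slope Real.log 1) (nhdsWithin 1 (Iio 1)) (nhds (1:ℝ)⁻¹) :=
    h.mono_left (nhdsWithin_mono _ (fun x hx => ne_of_lt hx))
  have h3 : ∀ x : ℝ, slope Real.log 1 x = Real.log x / (x - 1) := by
    intro x
    rw [slope_def_field, Real.log_one, sub_zero]
  simp only [inv_one] at h2
  exact Filter.Tendsto.congr h3 h2

lemma tendsto_D : Tendsto (fun t : ℝ => (t - 1) ^ 2) (nhdsWithin 1 (Iio 1)) (nhds 0) := by
  have : ContinuousAt (fun t : ℝ => (t - 1) ^ 2) 1 := by fun_prop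
  have h := this.tendsto.mono_left (nhdsWithin_le_nhds (s := Iio 1))
  simpa using h

lemma evD : ∀ᶠ x in nhdsWithin (1:ℝ) (Iio 1), HasDerivAt (fun t : ℝ => (t - 1) ^ 2) (2 * (x - 1)) x := by
  filter_upwards with x
  have h := ((hasDerivAt_id x).sub_const 1).pow 2
  refine h.congr_deriv ?_; simp [id_eq]

lemma evD' : ∀ᶠ x in nhdsWithin (1:ℝ) (Iio 1), 2 * (x - 1) ≠ 0 := by
  filter_upwards [self_mem_nhdsWithin] with x hx
  exact mul_ne_zero two_ne_zero (sub_ne_zero.mpr (ne_of_lt hx))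

lemma lim0 : Tendsto F0 (nhdsWithin (1:ℝ) (Iio 1)) (nhds 1) := by
  have hphi : Tendsto (fun t : ℝ => (t * Real.log t - t + 1) / ((t - 1) ^ 2))
      (nhdsWithin 1 (Iio 1)) (nhds (1/2)) := by
    apply HasDerivAt.lhopital_zero_nhdsLT (f' := fun t => Real.log t)
      (g' := fun t => 2 * (t - 1))
    · filter_upwards [hIoo_mem] with x hx
      have hl := Real.hasDerivAt_log hx.1.ne'
      have hx0 : x ≠ 0 := hx.1.ne'
      have h := (((hasDerivAt_id x).mul hl).sub (hasDerivAt_id x)).add_const 1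
      refine h.congr_deriv ?_
      field_simp
      simp
    · exact evD
    · exact evD'
    · have : ContinuousAt (fun t : ℝ => t * Real.log t - t + 1) 1 := by
        have := Real.continuousAt_log (x := 1) one_ne_zero
        fun_prop
      have h := this.tendsto.mono_left (nhdsWithin_le_nhds (s := Iio 1))
      simpa using h
    · exact tendsto_D
    · have h := hslope_log.div_const 2
      have heq : ∀ x : ℝ, Real.log x / (x - 1) / 2 = Real.log x / (2 * (x - 1)) := by
        intro x; rw [div_div, mul_comm]
      simpa [heq] using h
  have hsq : Tendsto (fun t : ℝ => 2 * Real.sqrt t) (nhdsWithin 1 (Iio 1)) (nhds 2) := by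
    have : ContinuousAt (fun t : ℝ => 2 * Real.sqrt t) 1 := by fun_prop
    have h := this.tendsto.mono_left (nhdsWithin_le_nhds (s := Iio 1))
    simpa using h
  have h := hsq.mul hphi
  have : (2 : ℝ) * (1/2) = 1 := by norm_num
  rw [this] at h
  apply h.congr
  intro x
  unfold F0
  rw [mul_div_assoc]

lemma lim1 : Tendsto F1 (nhdsWithin (1:ℝ) (Iio 1)) (nhds 1) := by
  have hphi : Tendsto (fun t : ℝ => (Real.log t - t + 1) / ((t - 1) ^ 2))
      (nhdsWithin 1 (Iio 1)) (nhds (-(1/2))) := by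
    apply HasDerivAt.lhopital_zero_nhdsLT (f' := fun t => t⁻¹ - 1)
      (g' := fun t => 2 * (t - 1))
    · filter_upwards [hIoo_mem] with x hx
      have hl := Real.hasDerivAt_log hx.1.ne'
      have h := (hl.sub (hasDerivAt_id x)).add_const 1
      refine h.congr_deriv ?_
      rfl
    · exact evD
    · exact evD'
    · have : ContinuousAt (fun t : ℝ => Real.log t - t + 1) 1 := by
        have := Real.continuousAt_log (x := 1) one_ne_zero
        fun_prop
      have h := this.tendsto.mono_left (nhdsWithin_le_nhds (s := Iio 1))
      simpa using h
    · exact tendsto_D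
    · have hcongr : ∀ x ∈ Ioo (0:ℝ) 1, -(2 * x)⁻¹ = (x⁻¹ - 1) / (2 * (x - 1)) := by
        intro x hx
        have hx0 : x ≠ 0 := hx.1.ne'
        have hx1 : x - 1 ≠ 0 := sub_ne_zero.mpr hx.2.ne
        field_simp
        ring
      have hc : Tendsto (fun x : ℝ => -(2 * x)⁻¹) (nhdsWithin 1 (Iio 1)) (nhds (-(1/2))) := by
        have : ContinuousAt (fun x : ℝ => -(2 * x)⁻¹) 1 := by fun_prop (disch := norm_num)
        have h := this.tendsto.mono_left (nhdsWithin_le_nhds (s := Iio 1))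
        norm_num at h
        norm_num
        exact h
      apply hc.congr'
      filter_upwards [hIoo_mem] with x hx
      exact hcongr x hx
  have hsq : Tendsto (fun t : ℝ => -2 * Real.sqrt t) (nhdsWithin 1 (Iio 1)) (nhds (-2)) := by
    have : ContinuousAt (fun t : ℝ => -2 * Real.sqrt t) 1 := by fun_prop
    have h := this.tendsto.mono_left (nhdsWithin_le_nhds (s := Iio 1))
    simpa using h
  have h := hsq.mul hphi
  have : (-2 : ℝ) * -(1/2) = 1 := by norm_num
  rw [this] at h
  apply h.congr
  intro x
  unfold F1
  rw [mul_div_assoc]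

/-- For `ℓ = 1`, `p = 1/2`: `h₀(t) = 2√t(t log t - t + 1)/(t-1)²` and
`h₁(t) = -2√t(log t - t + 1)/(t-1)²` satisfy the coupled system
`4t²hᵢ'' - (8t²/(1-t))hᵢ' + (4t/(1-t)²)(h_{1-i} - hᵢ) = -hᵢ` on `(0,1)`, and
both tend to `1` as `t → 1⁻`. -/
theorem stmt12 (h₀ h₁ : ℝ → ℝ)
    (hh₀ : ∀ t ∈ Ioo (0 : ℝ) 1,
      h₀ t = 2 * Real.sqrt t * (t * Real.log t - t + 1) / (t - 1) ^ 2)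
    (hh₁ : ∀ t ∈ Ioo (0 : ℝ) 1,
      h₁ t = -2 * Real.sqrt t * (Real.log t - t + 1) / (t - 1) ^ 2) :
    (∀ t ∈ Ioo (0 : ℝ) 1,
      4 * t ^ 2 * deriv (deriv h₀) t - (8 * t ^ 2 / (1 - t)) * deriv h₀ t
        + (4 * t / (1 - t) ^ 2) * (h₁ t - h₀ t) = -h₀ t) ∧
    (∀ t ∈ Ioo (0 : ℝ) 1,
      4 * t ^ 2 * deriv (deriv h₁) t - (8 * t ^ 2 / (1 - t)) * deriv h₁ t
        + (4 * t / (1 - t) ^ 2) * (h₀ t - h₁ t) = -h₁ t) ∧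
    Tendsto h₀ (nhdsWithin 1 (Iio 1)) (nhds 1) ∧
    Tendsto h₁ (nhdsWithin 1 (Iio 1)) (nhds 1) := by
  have hh₀' : ∀ t ∈ Ioo (0 : ℝ) 1, h₀ t = F0 t := hh₀
  have hh₁' : ∀ t ∈ Ioo (0 : ℝ) 1, h₁ t = F1 t := hh₁
  refine ⟨ode_part h₀ h₁ hh₀' hh₁', ode_part' h₀ h₁ hh₀' hh₁', ?_, ?_⟩
  · apply lim0.congr'
    filter_upwards [hIoo_mem] with x hx
    exact (hh₀' x hx).symm
  · apply lim1.congr'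
    filter_upwards [hIoo_mem] with x hx
    exact (hh₁' x hx).symm
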